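/- Let d ≥ 1 be an integer and α > d a real. There exists a constant C > 0, depending only on d and α, such that for every real λ > 0, every random variable W with W ≥ 1 almost surely, and all reals w ≥ 1 and S ≥ 2: ∑_{y ∈ ℤ^d, ‖y‖ ≥ S} E[ 1 − exp(−λ·w·W·‖y‖^{−α}) ] ≤ C·( λ·w·S^{d−α}·E[ W·1{λwW ≤ S^α} ] + (λw)^{d/α}·E[ W^{d/α}·1{λwW ≥ S^α} ] ). -/

import Mathlib

open MeasureTheory

open scoped ENNReal

/-- The Euclidean norm of a point of the integer lattice `ℤ^d`. -/
noncomputable def euclNorm {d : ℕ} (y : Fin d → ℤ) : ℝ :=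
  Real.sqrt (∑ i, ((y i : ℝ)) ^ 2)

namespace Stmt7Aux
variable {d : ℕ}

def natSup (y : Fin d → ℤ) : ℕ := Finset.univ.sup fun i => (y i).natAbs

lemma natAbs_le_natSup (y : Fin d → ℤ) (i : Fin d) : (y i).natAbs ≤ natSup y :=
  Finset.le_sup (f := fun i => (y i).natAbs) (Finset.mem_univ i)

lemma abs_cast_le (y : Fin d → ℤ) (i : Fin d) : |(y i : ℝ)| ≤ (natSup y : ℝ) := by
  have h : |y i| ≤ (natSup y : ℤ) := by
    rw [Int.abs_eq_natAbs]; exact_mod_cast natAbs_le_natSup y i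
  calc |(y i : ℝ)| = ((|y i| : ℤ) : ℝ) := by push_cast; ring
    _ ≤ (natSup y : ℝ) := by exact_mod_cast h

lemma natSup_le_euclNorm (hd : 1 ≤ d) (y : Fin d → ℤ) : (natSup y : ℝ) ≤ euclNorm y := by
  have hne : (Finset.univ : Finset (Fin d)).Nonempty := by
    simpa [Finset.univ_nonempty_iff] using Fin.pos_iff_nonempty.mp hd
  obtain ⟨i, -, hi⟩ := Finset.exists_mem_eq_sup Finset.univ hne fun i => (y i).natAbs
  have h1 : (natSup y : ℝ) = |(y i : ℝ)| := by
    rw [natSup, hi]; push_cast [Nat.cast_natAbs]; norm_num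
  rw [h1, euclNorm, ← Real.sqrt_sq_eq_abs]
  apply Real.sqrt_le_sqrt
  exact Finset.single_le_sum (f := fun j => ((y j : ℝ))^2) (fun j _ => sq_nonneg _)
    (Finset.mem_univ i)

lemma euclNorm_le (y : Fin d → ℤ) : euclNorm y ≤ Real.sqrt d * natSup y := by
  have h : euclNorm y ≤ Real.sqrt (d * (natSup y : ℝ)^2) := by
    apply Real.sqrt_le_sqrt
    calc ∑ i, ((y i : ℝ))^2 ≤ ∑ _i : Fin d, (natSup y : ℝ)^2 := by
          apply Finset.sum_le_sum; intro i _
          calc ((y i:ℝ))^2 = |(y i:ℝ)|^2 := (sq_abs _).symm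
            _ ≤ (natSup y : ℝ)^2 := pow_le_pow_left₀ (abs_nonneg _) (abs_cast_le y i) 2
      _ = d * (natSup y : ℝ)^2 := by simp [Finset.sum_const, nsmul_eq_mul]
  calc euclNorm y ≤ Real.sqrt (d * (natSup y : ℝ)^2) := h
    _ = Real.sqrt d * natSup y := by
        rw [Real.sqrt_mul (by positivity), Real.sqrt_sq (by positivity)]

lemma euclNorm_nonneg (y : Fin d → ℤ) : 0 ≤ euclNorm y := Real.sqrt_nonneg _

noncomputable def box (d N : ℕ) : Finset (Fin d → ℤ) := Fintype.piFinset fun _ => Finset.Icc (-(N:ℤ)) (N:ℤ)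

lemma mem_box {N : ℕ} {y : Fin d → ℤ} : y ∈ box d N ↔ natSup y ≤ N := by
  simp only [box, Fintype.mem_piFinset, Finset.mem_Icc, natSup, Finset.sup_le_iff,
    Finset.mem_univ, true_implies]
  constructor
  · intro h i; have := h i; omega
  · intro h i; have := h i; omega

lemma card_box (N : ℕ) : (box d N).card = (2 * N + 1) ^ d := by
  simp [box, Fintype.card_piFinset_const, Int.card_Icc]
  congr 1; omega

lemma tsum_le_card_mul {s : Set (Fin d → ℤ)} {N : ℕ}
    (hs : ∀ y ∈ s, natSup y ≤ N) (f : (Fin d → ℤ) → ℝ≥0∞) {c : ℝ≥0∞}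
    (hf : ∀ y ∈ s, f y ≤ c) :
    ∑' y : s, f y ≤ (((2 * N + 1) ^ d : ℕ) : ℝ≥0∞) * c := by
  have h1 : ∑' y : s, f y ≤ ∑' _y : s, c := ENNReal.tsum_le_tsum fun y => hf y y.2
  have h2 : ∑' _y : s, c ≤ ∑' _y : (box d N : Set (Fin d → ℤ)), c :=
    ENNReal.tsum_mono_subtype (fun _ => c) (fun y hy => by
      simpa [Finset.mem_coe, mem_box] using hs y hy)
  have h3 : ∑' _y : (box d N : Set (Fin d → ℤ)), c = (box d N).card * c := by
    rw [Finset.tsum_subtype' (box d N) (fun _ => c)]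
    simp [Finset.sum_const, nsmul_eq_mul]
  calc ∑' y : s, f y ≤ ∑' _y : (box d N : Set (Fin d → ℤ)), c := h1.trans h2
    _ = (((2 * N + 1) ^ d : ℕ) : ℝ≥0∞) * c := by rw [h3, card_box]

lemma tailSum (hd : 1 ≤ d) {α : ℝ} (hα : (d:ℝ) < α) :
    ∃ C > (0:ℝ), ∀ R : ℝ, 1 ≤ R →
      ∑' y : {y : Fin d → ℤ // R ≤ euclNorm y}, ENNReal.ofReal (euclNorm y.1 ^ (-α))
        ≤ ENNReal.ofReal (C * R ^ ((d:ℝ) - α)) := by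
  have hd0 : (0:ℝ) < d := by exact_mod_cast hd
  have hsd : (0:ℝ) < Real.sqrt d := Real.sqrt_pos.mpr hd0
  set r : ℝ := (2:ℝ) ^ ((d:ℝ) - α) with hrdef
  have hr0 : 0 < r := Real.rpow_pos_of_pos two_pos _
  have hr1 : r < 1 := by
    have h1 : (d:ℝ) - α < 0 := by linarith
    calc r < 2 ^ (0:ℝ) := Real.rpow_lt_rpow_of_exponent_lt (by norm_num) h1
      _ = 1 := Real.rpow_zero 2
  have h1r : (0:ℝ) < 1 - r := by linarith
  refine ⟨(6:ℝ)^d * (1 - r)⁻¹ * (Real.sqrt d) ^ (α - (d:ℝ)), by positivity, ?_⟩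
  intro R hR
  have hR0 : (0:ℝ) < R := by linarith
  set m₀ : ℕ := max 1 (Nat.ceil (R / Real.sqrt d)) with hm₀def
  have hm1 : 1 ≤ m₀ := le_max_left _ _
  have hm0R : R / Real.sqrt d ≤ (m₀:ℝ) :=
    (Nat.le_ceil _).trans (Nat.cast_le.mpr (le_max_right _ _))
  have hm0pos : (0:ℝ) < (m₀:ℝ) := by exact_mod_cast hm1
  -- key : points in the tail have large sup norm
  have key : ∀ y : Fin d → ℤ, R ≤ euclNorm y → m₀ ≤ natSup y := by
    intro y hy
    have h1 : R / Real.sqrt d ≤ (natSup y : ℝ) := by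
      rw [div_le_iff₀ hsd]
      calc R ≤ euclNorm y := hy
        _ ≤ Real.sqrt d * natSup y := euclNorm_le y
        _ = (natSup y : ℝ) * Real.sqrt d := mul_comm _ _
    have h2 : Nat.ceil (R / Real.sqrt d) ≤ natSup y := Nat.ceil_le.mpr h1
    have h3 : 1 ≤ natSup y := by
      by_contra h
      push_neg at h
      have hn0 : natSup y = 0 := by omega
      have hy0 : ∀ i, (y i : ℝ) = 0 := by
        intro i
        have := natAbs_le_natSup y i
        rw [hn0] at this
        have : (y i).natAbs = 0 := by omega
        exact_mod_cast Int.natAbs_eq_zero.mp this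
      have : euclNorm y = 0 := by
        simp [euclNorm, hy0]
      linarith
    exact max_le h3 h2
  -- the dyadic blocks
  set t : ℕ → Set (Fin d → ℤ) := fun j =>
    {y | m₀ * 2 ^ j ≤ natSup y ∧ natSup y < m₀ * 2 ^ (j + 1)} with htdef
  have cover : {y : Fin d → ℤ | R ≤ euclNorm y} ⊆ ⋃ j, t j := by
    intro y hy
    have hn : m₀ ≤ natSup y := key y hy
    set n := natSup y with hn_def
    have hdivpos : 1 ≤ n / m₀ := (Nat.one_le_div_iff (by omega)).mpr hn
    refine Set.mem_iUnion.mpr ⟨Nat.log 2 (n / m₀), ?_, ?_⟩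
    · have h1 : 2 ^ Nat.log 2 (n / m₀) ≤ n / m₀ := Nat.pow_log_le_self 2 (by omega)
      calc m₀ * 2 ^ Nat.log 2 (n / m₀) ≤ m₀ * (n / m₀) := Nat.mul_le_mul_left _ h1
        _ ≤ n := Nat.mul_div_le n m₀
    · have h2 : n / m₀ < 2 ^ (Nat.log 2 (n / m₀) + 1) := Nat.lt_pow_succ_log_self one_lt_two _
      have := (Nat.div_lt_iff_lt_mul (by omega : 0 < m₀)).mp h2
      calc n < 2 ^ (Nat.log 2 (n / m₀) + 1) * m₀ := this
        _ = m₀ * 2 ^ (Nat.log 2 (n / m₀) + 1) := mul_comm _ _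
  -- bound on each block
  have blockbound : ∀ j : ℕ,
      ∑' y : t j, ENNReal.ofReal (euclNorm y.1 ^ (-α))
        ≤ ENNReal.ofReal ((6:ℝ)^d * (m₀:ℝ) ^ ((d:ℝ) - α)) * (ENNReal.ofReal r) ^ j := by
    intro j
    have hm1' : (1:ℝ) ≤ (m₀:ℝ) := by exact_mod_cast hm1
    have h2j : (1:ℝ) ≤ 2 ^ j := by exact_mod_cast Nat.one_le_two_pow (n := j)
    have hx0 : (0:ℝ) < (m₀:ℝ) * 2 ^ j := by positivity
    have hx1 : (1:ℝ) ≤ (m₀:ℝ) * 2 ^ j := by nlinarith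
    have hαpos : (0:ℝ) < α := lt_trans hd0 hα
    have step1 : ∑' y : t j, ENNReal.ofReal (euclNorm y.1 ^ (-α))
        ≤ (((2 * (m₀ * 2 ^ (j+1)) + 1) ^ d : ℕ) : ℝ≥0∞) *
            ENNReal.ofReal (((m₀:ℝ) * 2 ^ j) ^ (-α)) := by
      refine tsum_le_card_mul (fun y hy => hy.2.le)
        (fun y => ENNReal.ofReal (euclNorm y ^ (-α))) ?_
      intro y hy
      apply ENNReal.ofReal_le_ofReal
      apply Real.rpow_le_rpow_of_nonpos hx0 _ (by linarith)
      calc (m₀:ℝ) * 2 ^ j = ((m₀ * 2 ^ j : ℕ) : ℝ) := by push_cast; ring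
        _ ≤ (natSup y : ℝ) := by exact_mod_cast hy.1
        _ ≤ euclNorm y := natSup_le_euclNorm hd y
    refine step1.trans ?_
    have cast1 : (((2 * (m₀ * 2 ^ (j+1)) + 1) ^ d : ℕ) : ℝ≥0∞)
        = ENNReal.ofReal ((2*(m₀:ℝ)*2^(j+1)+1)^d) := by
      rw [← ENNReal.ofReal_natCast]
      congr 1
      push_cast
      ring
    rw [cast1, ← ENNReal.ofReal_mul (by positivity),
      ← ENNReal.ofReal_pow hr0.le, ← ENNReal.ofReal_mul (by positivity)]
    apply ENNReal.ofReal_le_ofReal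
    -- now a real inequality
    set x : ℝ := (m₀:ℝ) * 2 ^ j with hxdef
    have hbase : 2*(m₀:ℝ)*2^(j+1)+1 ≤ 6 * x := by
      have : (2:ℝ)^(j+1) = 2 * 2^j := by ring
      rw [this, hxdef]
      nlinarith
    have hpow : (2*(m₀:ℝ)*2^(j+1)+1)^d ≤ 6^d * x^d := by
      calc (2*(m₀:ℝ)*2^(j+1)+1)^d ≤ (6*x)^d := by
            apply pow_le_pow_left₀ (by positivity) hbase
        _ = 6^d * x^d := mul_pow _ _ _
    have hxd : x ^ d * x ^ (-α) = x ^ ((d:ℝ) - α) := by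
      rw [← Real.rpow_natCast x d, ← Real.rpow_add hx0]
      ring_nf
    have hsplit : x ^ ((d:ℝ) - α) = (m₀:ℝ) ^ ((d:ℝ) - α) * r ^ j := by
      rw [hxdef, Real.mul_rpow hm0pos.le (by positivity)]
      congr 1
      rw [← Real.rpow_natCast (2:ℝ) j, ← Real.rpow_natCast r j, hrdef,
        ← Real.rpow_mul (by norm_num : (0:ℝ) ≤ 2),
        ← Real.rpow_mul (by norm_num : (0:ℝ) ≤ 2), mul_comm]
    calc (2*(m₀:ℝ)*2^(j+1)+1)^d * x ^ (-α)
        ≤ (6^d * x^d) * x ^ (-α) := by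
          apply mul_le_mul_of_nonneg_right hpow (Real.rpow_nonneg hx0.le _)
      _ = 6^d * (x ^ d * x ^ (-α)) := by ring
      _ = 6^d * ((m₀:ℝ) ^ ((d:ℝ) - α) * r ^ j) := by rw [hxd, hsplit]
      _ = 6^d * (m₀:ℝ) ^ ((d:ℝ) - α) * r ^ j := by ring
  -- assemble
  have hm : (m₀:ℝ) ^ ((d:ℝ) - α) ≤ R ^ ((d:ℝ) - α) * Real.sqrt d ^ (α - (d:ℝ)) := by
    have h1 : (m₀:ℝ) ^ ((d:ℝ) - α) ≤ (R / Real.sqrt d) ^ ((d:ℝ) - α) :=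
      Real.rpow_le_rpow_of_nonpos (by positivity) hm0R (by linarith)
    have h2 : (R / Real.sqrt d) ^ ((d:ℝ) - α)
        = R ^ ((d:ℝ) - α) * Real.sqrt d ^ (α - (d:ℝ)) := by
      rw [Real.div_rpow hR0.le hsd.le, div_eq_mul_inv, ← Real.rpow_neg hsd.le]
      ring_nf
    linarith [h1, h2.le, h2.ge]
  calc ∑' y : {y : Fin d → ℤ // R ≤ euclNorm y}, ENNReal.ofReal (euclNorm y.1 ^ (-α))
      ≤ ∑' y : (⋃ j, t j), ENNReal.ofReal (euclNorm y.1 ^ (-α)) :=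
        ENNReal.tsum_mono_subtype (fun y => ENNReal.ofReal (euclNorm y ^ (-α))) cover
    _ ≤ ∑' j, ∑' y : t j, ENNReal.ofReal (euclNorm y.1 ^ (-α)) :=
        ENNReal.tsum_iUnion_le_tsum (fun y => ENNReal.ofReal (euclNorm y ^ (-α))) t
    _ ≤ ∑' j : ℕ, ENNReal.ofReal ((6:ℝ)^d * (m₀:ℝ) ^ ((d:ℝ) - α)) * (ENNReal.ofReal r) ^ j :=
        ENNReal.tsum_le_tsum blockbound
    _ = ENNReal.ofReal ((6:ℝ)^d * (m₀:ℝ) ^ ((d:ℝ) - α)) * ∑' j : ℕ, (ENNReal.ofReal r) ^ j :=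
        ENNReal.tsum_mul_left
    _ = ENNReal.ofReal ((6:ℝ)^d * (m₀:ℝ) ^ ((d:ℝ) - α)) * (1 - ENNReal.ofReal r)⁻¹ := by
        rw [ENNReal.tsum_geometric]
    _ = ENNReal.ofReal ((6:ℝ)^d * (m₀:ℝ) ^ ((d:ℝ) - α) * (1 - r)⁻¹) := by
        have h1 : (1:ℝ≥0∞) - ENNReal.ofReal r = ENNReal.ofReal (1 - r) := by
          rw [ENNReal.ofReal_sub _ hr0.le, ENNReal.ofReal_one]
        rw [h1, ← ENNReal.ofReal_inv_of_pos h1r, ← ENNReal.ofReal_mul (by positivity)]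
    _ ≤ ENNReal.ofReal ((6:ℝ)^d * (1 - r)⁻¹ * Real.sqrt d ^ (α - (d:ℝ)) * R ^ ((d:ℝ) - α)) := by
        apply ENNReal.ofReal_le_ofReal
        have h6 : (0:ℝ) ≤ 6^d * (1-r)⁻¹ := by positivity
        nlinarith [mul_le_mul_of_nonneg_left hm h6]

lemma keyBound (hd : 1 ≤ d) {α : ℝ} (hα : (d:ℝ) < α) :
    ∃ C > (0:ℝ), ∀ S : ℝ, 2 ≤ S → ∀ t : ℝ, 0 < t →
      ∑' y : {y : Fin d → ℤ // S ≤ euclNorm y},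
          ENNReal.ofReal (1 - Real.exp (-(t * euclNorm y.1 ^ (-α))))
        ≤ if t ≤ S ^ α then ENNReal.ofReal (C * (t * S ^ ((d:ℝ) - α)))
          else ENNReal.ofReal (C * t ^ ((d:ℝ)/α)) := by
  have hd0 : (0:ℝ) < d := by exact_mod_cast hd
  have hαpos : (0:ℝ) < α := lt_trans hd0 hα
  obtain ⟨C₁, hC₁, hC₁'⟩ := tailSum hd hα
  refine ⟨C₁ + 3^d, by positivity, ?_⟩
  intro S hS t ht
  have hS0 : (0:ℝ) < S := by linarith
  -- generic tail estimate
  have sub1 : ∀ R : ℝ, 1 ≤ R →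
      ∑' y : {y : Fin d → ℤ // R ≤ euclNorm y},
          ENNReal.ofReal (1 - Real.exp (-(t * euclNorm y.1 ^ (-α))))
        ≤ ENNReal.ofReal t * ENNReal.ofReal (C₁ * R ^ ((d:ℝ) - α)) := by
    intro R hR
    have step : ∀ y : {y : Fin d → ℤ // R ≤ euclNorm y},
        ENNReal.ofReal (1 - Real.exp (-(t * euclNorm y.1 ^ (-α))))
          ≤ ENNReal.ofReal t * ENNReal.ofReal (euclNorm y.1 ^ (-α)) := by
      intro y
      rw [← ENNReal.ofReal_mul ht.le]
      apply ENNReal.ofReal_le_ofReal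
      have h1 := Real.add_one_le_exp (-(t * euclNorm y.1 ^ (-α)))
      linarith
    calc ∑' y : {y : Fin d → ℤ // R ≤ euclNorm y},
          ENNReal.ofReal (1 - Real.exp (-(t * euclNorm y.1 ^ (-α))))
        ≤ ∑' y : {y : Fin d → ℤ // R ≤ euclNorm y},
            ENNReal.ofReal t * ENNReal.ofReal (euclNorm y.1 ^ (-α)) :=
          ENNReal.tsum_le_tsum step
      _ = ENNReal.ofReal t *
            ∑' y : {y : Fin d → ℤ // R ≤ euclNorm y},
              ENNReal.ofReal (euclNorm y.1 ^ (-α)) := ENNReal.tsum_mul_left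
      _ ≤ ENNReal.ofReal t * ENNReal.ofReal (C₁ * R ^ ((d:ℝ) - α)) := by
          exact mul_le_mul_right (hC₁' R hR) _
  split_ifs with h
  · calc ∑' y : {y : Fin d → ℤ // S ≤ euclNorm y},
          ENNReal.ofReal (1 - Real.exp (-(t * euclNorm y.1 ^ (-α))))
        ≤ ENNReal.ofReal t * ENNReal.ofReal (C₁ * S ^ ((d:ℝ) - α)) :=
          sub1 S (by linarith)
      _ = ENNReal.ofReal (t * (C₁ * S ^ ((d:ℝ) - α))) := (ENNReal.ofReal_mul ht.le).symm
      _ ≤ ENNReal.ofReal ((C₁ + 3^d) * (t * S ^ ((d:ℝ) - α))) := by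
          apply ENNReal.ofReal_le_ofReal
          have h3 : (0:ℝ) ≤ 3^d := by positivity
          have hX : (0:ℝ) ≤ S ^ ((d:ℝ) - α) := Real.rpow_nonneg hS0.le _
          nlinarith [mul_nonneg (mul_nonneg h3 ht.le) hX]
  · push_neg at h
    set ρ : ℝ := t ^ α⁻¹ with hρdef
    have hρ0 : (0:ℝ) < ρ := Real.rpow_pos_of_pos ht _
    have hρS : S ≤ ρ := by
      have h0 : S = (S ^ α) ^ α⁻¹ := (Real.rpow_rpow_inv hS0.le (ne_of_gt hαpos)).symm
      rw [h0, hρdef]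
      exact Real.rpow_le_rpow (by positivity) h.le (by positivity)
    have hρ1 : (1:ℝ) ≤ ρ := le_trans (by linarith) hρS
    -- exponent arithmetic
    have e1 : t * (C₁ * ρ ^ ((d:ℝ) - α)) = C₁ * t ^ ((d:ℝ)/α) := by
      have : ρ ^ ((d:ℝ) - α) = t ^ (((d:ℝ) - α)/α) := by
        rw [hρdef, ← Real.rpow_mul ht.le]
        congr 1
        field_simp
      rw [this]
      have : t * t ^ (((d:ℝ) - α)/α) = t ^ ((d:ℝ)/α) := by
        nth_rewrite 1 [← Real.rpow_one t]
        rw [← Real.rpow_add ht]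
        congr 1
        field_simp; ring
      calc t * (C₁ * t ^ (((d:ℝ) - α)/α)) = C₁ * (t * t ^ (((d:ℝ) - α)/α)) := by ring
        _ = C₁ * t ^ ((d:ℝ)/α) := by rw [this]
    have e3 : ρ ^ d = t ^ ((d:ℝ)/α) := by
      rw [hρdef, ← Real.rpow_natCast (t ^ α⁻¹) d, ← Real.rpow_mul ht.le]
      congr 1
      field_simp
    -- splitting
    have hsubset : {y : Fin d → ℤ | S ≤ euclNorm y} ⊆
        {y : Fin d → ℤ | ρ ≤ euclNorm y} ∪ {y : Fin d → ℤ | euclNorm y ≤ ρ} := by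
      intro y _
      rcases le_total ρ (euclNorm y) with h' | h'
      · exact Or.inl h'
      · exact Or.inr h'
    have part2 : ∑' y : {y : Fin d → ℤ | euclNorm y ≤ ρ},
        ENNReal.ofReal (1 - Real.exp (-(t * euclNorm y.1 ^ (-α))))
          ≤ ENNReal.ofReal (3^d * t ^ ((d:ℝ)/α)) := by
      have hcount : ∀ y ∈ {y : Fin d → ℤ | euclNorm y ≤ ρ}, natSup y ≤ Nat.floor ρ := by
        intro y hy
        exact Nat.le_floor (le_trans (natSup_le_euclNorm hd y) hy)
      have hone : ∀ y ∈ {y : Fin d → ℤ | euclNorm y ≤ ρ},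
          (fun y => ENNReal.ofReal (1 - Real.exp (-(t * euclNorm y ^ (-α))))) y ≤ 1 := by
        intro y _
        rw [← ENNReal.ofReal_one]
        apply ENNReal.ofReal_le_ofReal
        have := Real.exp_nonneg (-(t * euclNorm y ^ (-α)))
        linarith
      have := tsum_le_card_mul hcount
        (fun y => ENNReal.ofReal (1 - Real.exp (-(t * euclNorm y ^ (-α))))) hone
      refine this.trans ?_
      rw [mul_one, ← ENNReal.ofReal_natCast]
      apply ENNReal.ofReal_le_ofReal
      have hfl : (Nat.floor ρ : ℝ) ≤ ρ := Nat.floor_le hρ0.le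
      have hb : ((2 * Nat.floor ρ + 1 : ℕ) : ℝ) ≤ 3 * ρ := by
        push_cast
        linarith
      calc (((2 * Nat.floor ρ + 1) ^ d : ℕ) : ℝ) = ((2 * Nat.floor ρ + 1 : ℕ) : ℝ) ^ d := by
            push_cast; ring
        _ ≤ (3 * ρ) ^ d := pow_le_pow_left₀ (by positivity) hb d
        _ = 3 ^ d * ρ ^ d := mul_pow _ _ _
        _ = 3 ^ d * t ^ ((d:ℝ)/α) := by rw [e3]
    have part1 : ∑' y : {y : Fin d → ℤ | ρ ≤ euclNorm y},
        ENNReal.ofReal (1 - Real.exp (-(t * euclNorm y.1 ^ (-α))))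
          ≤ ENNReal.ofReal (C₁ * t ^ ((d:ℝ)/α)) := by
      refine (sub1 ρ hρ1).trans ?_
      rw [← ENNReal.ofReal_mul ht.le, e1]
    calc ∑' y : {y : Fin d → ℤ // S ≤ euclNorm y},
          ENNReal.ofReal (1 - Real.exp (-(t * euclNorm y.1 ^ (-α))))
        ≤ ∑' y : ↑({y : Fin d → ℤ | ρ ≤ euclNorm y} ∪ {y : Fin d → ℤ | euclNorm y ≤ ρ}),
            ENNReal.ofReal (1 - Real.exp (-(t * euclNorm y.1 ^ (-α)))) :=
          ENNReal.tsum_mono_subtype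
            (fun y => ENNReal.ofReal (1 - Real.exp (-(t * euclNorm y ^ (-α))))) hsubset
      _ ≤ (∑' y : {y : Fin d → ℤ | ρ ≤ euclNorm y},
            ENNReal.ofReal (1 - Real.exp (-(t * euclNorm y.1 ^ (-α))))) +
          ∑' y : {y : Fin d → ℤ | euclNorm y ≤ ρ},
            ENNReal.ofReal (1 - Real.exp (-(t * euclNorm y.1 ^ (-α)))) :=
          ENNReal.tsum_union_le
            (fun y => ENNReal.ofReal (1 - Real.exp (-(t * euclNorm y ^ (-α))))) _ _
      _ ≤ ENNReal.ofReal (C₁ * t ^ ((d:ℝ)/α)) + ENNReal.ofReal (3^d * t ^ ((d:ℝ)/α)) :=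
          add_le_add part1 part2
      _ = ENNReal.ofReal ((C₁ + 3^d) * t ^ ((d:ℝ)/α)) := by
          rw [← ENNReal.ofReal_add (by positivity) (by positivity)]
          congr 1
          ring

end Stmt7Aux

/-- **(6.11).** For `d ≥ 1`, `α > d` there is `C > 0`, depending only on `d, α`, such that
for every `λ > 0`, every random variable `W ≥ 1` a.s. and all `w ≥ 1`, `S ≥ 2`:
`∑_{‖y‖ ≥ S} E[1 - exp(-λ w W ‖y‖^{-α})]
  ≤ C (λ w S^{d-α} E[W 1{λwW ≤ S^α}] + (λw)^{d/α} E[W^{d/α} 1{λwW ≥ S^α}])`. -/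
theorem stmt7 (d : ℕ) (hd : 1 ≤ d) (α : ℝ) (hα : (d : ℝ) < α) :
    ∃ C > (0 : ℝ),
      ∀ lam : ℝ, 0 < lam →
      ∀ (Ω : Type) [MeasurableSpace Ω] (μ : Measure Ω) [IsProbabilityMeasure μ]
        (W : Ω → ℝ), Measurable W → (∀ᵐ ω ∂μ, 1 ≤ W ω) →
      ∀ w S : ℝ, 1 ≤ w → 2 ≤ S →
      (∑' y : {y : Fin d → ℤ // S ≤ euclNorm y},
          ∫⁻ ω, ENNReal.ofReal
            (1 - Real.exp (-(lam * w * W ω * euclNorm y.1 ^ (-α)))) ∂μ)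
        ≤ ENNReal.ofReal C *
            (ENNReal.ofReal (lam * w * S ^ ((d : ℝ) - α)) *
                ∫⁻ ω, ENNReal.ofReal
                  (if lam * w * W ω ≤ S ^ α then W ω else 0) ∂μ +
              ENNReal.ofReal ((lam * w) ^ ((d : ℝ) / α)) *
                ∫⁻ ω, ENNReal.ofReal
                  (if S ^ α ≤ lam * w * W ω then W ω ^ ((d : ℝ) / α) else 0) ∂μ) := by
  obtain ⟨C, hC, hkey⟩ := Stmt7Aux.keyBound hd hα
  refine ⟨C, hC, ?_⟩
  intro lam hlam Ω _ μ _ W hWm hW1 w S hw hS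
  have hw0 : (0:ℝ) < w := lt_of_lt_of_le one_pos hw
  have hlw : (0:ℝ) < lam * w := mul_pos hlam hw0
  -- measurability
  have hmeas : ∀ y : {y : Fin d → ℤ // S ≤ euclNorm y}, Measurable fun ω =>
      ENNReal.ofReal (1 - Real.exp (-(lam * w * W ω * euclNorm y.1 ^ (-α)))) := by
    intro y
    apply Measurable.ennreal_ofReal
    apply Measurable.const_sub
    exact (Real.measurable_exp.comp (((hWm.const_mul (lam * w)).mul_const _).neg))
  have hg1 : Measurable fun ω =>
      ENNReal.ofReal (if lam * w * W ω ≤ S ^ α then W ω else 0) := by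
    apply Measurable.ennreal_ofReal
    exact Measurable.ite (measurableSet_le (hWm.const_mul (lam * w)) measurable_const)
      hWm measurable_const
  -- swap sum and integral
  rw [← lintegral_tsum (fun y => (hmeas y).aemeasurable)]
  -- pointwise bound
  have hpoint : ∀ᵐ ω ∂μ,
      (∑' y : {y : Fin d → ℤ // S ≤ euclNorm y},
          ENNReal.ofReal (1 - Real.exp (-(lam * w * W ω * euclNorm y.1 ^ (-α)))))
        ≤ ENNReal.ofReal C *
            (ENNReal.ofReal (lam * w * S ^ ((d : ℝ) - α)) *
                ENNReal.ofReal (if lam * w * W ω ≤ S ^ α then W ω else 0) +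
              ENNReal.ofReal ((lam * w) ^ ((d : ℝ) / α)) *
                ENNReal.ofReal (if S ^ α ≤ lam * w * W ω then W ω ^ ((d : ℝ) / α) else 0)) := by
    filter_upwards [hW1] with ω hWω
    have hWω0 : (0:ℝ) ≤ W ω := by linarith
    have ht : (0:ℝ) < lam * w * W ω := by nlinarith
    have hb := hkey S hS (lam * w * W ω) ht
    rcases le_or_gt (lam * w * W ω) (S ^ α) with h | h
    · rw [if_pos h] at hb
      refine hb.trans ?_
      rw [if_pos h]
      calc ENNReal.ofReal (C * (lam * w * W ω * S ^ ((d:ℝ) - α)))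
          = ENNReal.ofReal C *
              (ENNReal.ofReal (lam * w * S ^ ((d:ℝ) - α)) * ENNReal.ofReal (W ω)) := by
            rw [← ENNReal.ofReal_mul (by positivity), ← ENNReal.ofReal_mul hC.le]
            congr 1
            ring
        _ ≤ _ := mul_le_mul_right le_self_add _
    · rw [if_neg (not_le.mpr h)] at hb
      refine hb.trans ?_
      rw [if_neg (not_le.mpr h), if_pos h.le]
      have hr : (lam * w * W ω) ^ ((d:ℝ)/α) = (lam * w) ^ ((d:ℝ)/α) * W ω ^ ((d:ℝ)/α) :=
        Real.mul_rpow hlw.le hWω0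
      calc ENNReal.ofReal (C * (lam * w * W ω) ^ ((d:ℝ)/α))
          = ENNReal.ofReal C *
              (ENNReal.ofReal ((lam * w) ^ ((d:ℝ)/α)) * ENNReal.ofReal (W ω ^ ((d:ℝ)/α))) := by
            rw [← ENNReal.ofReal_mul (by positivity), ← ENNReal.ofReal_mul hC.le, hr]
        _ ≤ _ := by
            rw [ENNReal.ofReal_zero, mul_zero, zero_add]
  refine (lintegral_mono_ae hpoint).trans ?_
  rw [lintegral_const_mul' _ _ ENNReal.ofReal_ne_top]
  apply mul_le_mul_right
  rw [lintegral_add_left (hg1.const_mul _),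
    lintegral_const_mul' _ _ ENNReal.ofReal_ne_top,
    lintegral_const_mul' _ _ ENNReal.ofReal_ne_top]
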